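/- Let Σ_m, Σ_n be signature matrices and X ∈ K^{m×n}, and suppose [√c X; I] = HR where H = [H₁;H₂] ∈ K^{(m+n)×n} satisfies H*diag(Σ_m,Σ_n)H = Σ̂ for a signature matrix Σ̂, R nonsingular, and c > 0 with I + c Σ_n X*Σ_m X invertible. Then X(aI + b Σ_n X*Σ_m X)(I + c Σ_n X*Σ_m X)⁻¹ = (b/c)X + (1/√c)(a − b/c) H₁ Σ̂ H₂* Σ_n, for any scalars a, b. -/

import Mathlib

open Matrix

/-- A signature matrix: diagonal with entries `±1`. -/
def IsSignatureMatrix {k : ℕ} (S : Matrix (Fin k) (Fin k) ℂ) : Prop :=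
  ∃ d : Fin k → ℝ, (∀ i, d i = 1 ∨ d i = -1) ∧ S = Matrix.diagonal fun i => (d i : ℂ)

lemma sig_mul_self {k : ℕ} {S : Matrix (Fin k) (Fin k) ℂ} (h : IsSignatureMatrix S) :
    S * S = 1 := by
  obtain ⟨d, hd, rfl⟩ := h
  rw [Matrix.diagonal_mul_diagonal]
  have : (fun i => (d i : ℂ) * (d i : ℂ)) = fun _ => 1 := funext fun i => by
    rcases hd i with h | h <;> simp [h]
  rw [this, Matrix.diagonal_one]

/-- The hyperbolic-QR-based form of the ΣDWH iteration: if
`[√c X; I] = H R` with `Hᴴ diag(Σₘ,Σₙ) H = Σ̂` a signature matrix and `R`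
nonsingular, then
`X(aI + b Σₙ Xᴴ Σₘ X)(I + c Σₙ Xᴴ Σₘ X)⁻¹
  = (b/c) X + (1/√c)(a − b/c) H₁ Σ̂ H₂ᴴ Σₙ`. -/
theorem sigma_dwh_hyperbolic_qr {m n : ℕ}
    (Sigm : Matrix (Fin m) (Fin m) ℂ) (Sign : Matrix (Fin n) (Fin n) ℂ)
    (hSigm : IsSignatureMatrix Sigm) (hSign : IsSignatureMatrix Sign)
    (X : Matrix (Fin m) (Fin n) ℂ) (a b : ℂ) (c : ℝ) (hc : 0 < c)
    (H₁ : Matrix (Fin m) (Fin n) ℂ) (H₂ R SigHat : Matrix (Fin n) (Fin n) ℂ)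
    (hSigHat : IsSignatureMatrix SigHat)
    (hR : IsUnit R.det)
    (htop : (Real.sqrt c : ℂ) • X = H₁ * R)
    (hbot : (1 : Matrix (Fin n) (Fin n) ℂ) = H₂ * R)
    (hH : (Matrix.fromRows H₁ H₂)ᴴ * Matrix.fromBlocks Sigm 0 0 Sign *
        Matrix.fromRows H₁ H₂ = SigHat)
    (hinv : IsUnit (1 + (c : ℂ) • (Sign * Xᴴ * Sigm * X)).det) :
    X * (a • (1 : Matrix (Fin n) (Fin n) ℂ) + b • (Sign * Xᴴ * Sigm * X)) *
        (1 + (c : ℂ) • (Sign * Xᴴ * Sigm * X))⁻¹ =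
      (b / (c : ℂ)) • X +
        ((1 / (Real.sqrt c : ℂ)) * (a - b / (c : ℂ))) • (H₁ * SigHat * H₂ᴴ * Sign) := by
  have hc0 : (c : ℂ) ≠ 0 := by exact_mod_cast hc.ne'
  have hs0 : (Real.sqrt c : ℂ) ≠ 0 := by
    exact_mod_cast (Real.sqrt_pos.mpr hc).ne'
  -- expand hH
  have hHexp : H₁ᴴ * Sigm * H₁ + H₂ᴴ * Sign * H₂ = SigHat := by
    rw [conjTranspose_fromRows_eq_fromCols_conjTranspose, Matrix.mul_assoc,
      fromBlocks_mul_fromRows, fromCols_mul_fromRows] at hH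
    simpa [Matrix.mul_assoc] using hH
  -- R is invertible
  have hRr : R * R⁻¹ = 1 := mul_nonsing_inv R hR
  have hRl : R⁻¹ * R = 1 := nonsing_inv_mul R hR
  have hH2 : H₂ = R⁻¹ := by
    calc H₂ = H₂ * (R * R⁻¹) := by rw [hRr, Matrix.mul_one]
    _ = (H₂ * R) * R⁻¹ := by rw [Matrix.mul_assoc]
    _ = R⁻¹ := by rw [← hbot, Matrix.one_mul]
  have hRH : Rᴴ * (R⁻¹)ᴴ = 1 := by
    rw [← conjTranspose_mul, hRl, conjTranspose_one]
  have hRHl : (R⁻¹)ᴴ * Rᴴ = 1 := by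
    rw [← conjTranspose_mul, hRr, conjTranspose_one]
  -- key identity: Sign + c • (Xᴴ Sigm X) = Rᴴ SigHat R
  have hA : Sign + (c : ℂ) • (Xᴴ * Sigm * X) = Rᴴ * SigHat * R := by
    have h1 : ((Real.sqrt c : ℂ) • X)ᴴ * Sigm * ((Real.sqrt c : ℂ) • X)
        = (c : ℂ) • (Xᴴ * Sigm * X) := by
      simp only [conjTranspose_smul, Complex.star_def, Complex.conj_ofReal]
      rw [Matrix.smul_mul, Matrix.mul_smul, Matrix.smul_mul, smul_smul]
      congr 1
      rw [← Complex.ofReal_mul, Real.mul_self_sqrt hc.le]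
    have h2 : ((Real.sqrt c : ℂ) • X)ᴴ * Sigm * ((Real.sqrt c : ℂ) • X)
        = Rᴴ * (H₁ᴴ * Sigm * H₁) * R := by
      rw [htop, conjTranspose_mul]
      simp only [Matrix.mul_assoc]
    have h3 : Sign = Rᴴ * (H₂ᴴ * Sign * H₂) * R := by
      have : Rᴴ * (H₂ᴴ * Sign * H₂) * R = (H₂ * R)ᴴ * Sign * (H₂ * R) := by
        rw [conjTranspose_mul]; simp only [Matrix.mul_assoc]
      rw [this, ← hbot, conjTranspose_one, Matrix.one_mul, Matrix.mul_one]
    calc Sign + (c : ℂ) • (Xᴴ * Sigm * X)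
        = Rᴴ * (H₂ᴴ * Sign * H₂) * R + Rᴴ * (H₁ᴴ * Sigm * H₁) * R := by
          rw [← h1, h2, ← h3]
      _ = Rᴴ * (H₁ᴴ * Sigm * H₁ + H₂ᴴ * Sign * H₂) * R := by noncomm_ring
      _ = Rᴴ * SigHat * R := by rw [hHexp]
  have hSS : Sign * Sign = 1 := sig_mul_self hSign
  have hSig2 : SigHat * SigHat = 1 := sig_mul_self hSigHat
  -- N = Sign * (Rᴴ SigHat R)
  have hNfact : 1 + (c : ℂ) • (Sign * Xᴴ * Sigm * X) = Sign * (Rᴴ * SigHat * R) := by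
    rw [← hA, Matrix.mul_add, hSS, Matrix.mul_smul]
    congr 2
    simp only [Matrix.mul_assoc]
  set M : Matrix (Fin n) (Fin n) ℂ := Sign * Xᴴ * Sigm * X with hM
  set N : Matrix (Fin n) (Fin n) ℂ := 1 + (c : ℂ) • M with hN
  -- explicit inverse of N
  have hNinv : N⁻¹ = R⁻¹ * SigHat * (R⁻¹)ᴴ * Sign := by
    apply inv_eq_right_inv
    calc N * (R⁻¹ * SigHat * (R⁻¹)ᴴ * Sign)
        = Sign * Rᴴ * SigHat * (R * R⁻¹) * SigHat * (R⁻¹)ᴴ * Sign := by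
          rw [hNfact]; noncomm_ring
      _ = Sign * Rᴴ * (SigHat * SigHat) * (R⁻¹)ᴴ * Sign := by
          rw [hRr]; noncomm_ring
      _ = Sign * (Rᴴ * (R⁻¹)ᴴ) * Sign := by rw [hSig2]; noncomm_ring
      _ = 1 := by rw [hRH, Matrix.mul_one, hSS]
  have hXN : X * N⁻¹ = (1 / (Real.sqrt c : ℂ)) • (H₁ * SigHat * H₂ᴴ * Sign) := by
    have key : (Real.sqrt c : ℂ) • (X * N⁻¹) = H₁ * SigHat * H₂ᴴ * Sign := by
      calc (Real.sqrt c : ℂ) • (X * N⁻¹)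
          = ((Real.sqrt c : ℂ) • X) * N⁻¹ := by rw [Matrix.smul_mul]
        _ = H₁ * (R * R⁻¹) * SigHat * (R⁻¹)ᴴ * Sign := by
            rw [htop, hNinv]; simp only [Matrix.mul_assoc]
        _ = H₁ * SigHat * H₂ᴴ * Sign := by
            rw [hRr, Matrix.mul_one, hH2, conjTranspose_nonsing_inv]
    rw [← key, smul_smul, one_div, inv_mul_cancel₀ hs0, one_smul]
  -- split the polynomial
  have hsplit : a • (1 : Matrix (Fin n) (Fin n) ℂ) + b • M
      = (b / (c : ℂ)) • N + (a - b / (c : ℂ)) • 1 := by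
    rw [hN, smul_add, smul_smul, div_mul_cancel₀ b hc0, sub_smul]
    abel
  have hNN : N * N⁻¹ = 1 := mul_nonsing_inv N hinv
  calc X * (a • (1 : Matrix (Fin n) (Fin n) ℂ) + b • M) * N⁻¹
      = X * ((b / (c : ℂ)) • N + (a - b / (c : ℂ)) • 1) * N⁻¹ := by rw [hsplit]
    _ = (b / (c : ℂ)) • (X * (N * N⁻¹)) + (a - b / (c : ℂ)) • (X * N⁻¹) := by
        rw [Matrix.mul_add, Matrix.add_mul, Matrix.mul_smul, Matrix.mul_smul,
          Matrix.smul_mul, Matrix.smul_mul, Matrix.mul_one, Matrix.mul_assoc]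
    _ = (b / (c : ℂ)) • X + (a - b / (c : ℂ)) • (X * N⁻¹) := by
        rw [hNN, Matrix.mul_one]
    _ = (b / (c : ℂ)) • X +
        ((1 / (Real.sqrt c : ℂ)) * (a - b / (c : ℂ))) • (H₁ * SigHat * H₂ᴴ * Sign) := by
        rw [hXN, smul_smul, mul_comm]
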